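/- Let T_0 be a rooted tree whose root has k ≥ 3 children with subtrees T_1,...,T_k, and let T_0' be the tree whose root has two children: a new node x with children the roots of T_1,...,T_{k−1}, and the root of T_k. Then Φ(T_0') − Φ(T_0) = binom(|L(T_1)|+...+|L(T_{k−1})|, 2) > 0. -/

import Mathlib

/-- Rooted trees with natural-number-labeled leaves. -/
inductive PTree where
  | leaf : ℕ → PTree
  | node : List PTree → PTree

namespace PTree

/-- The list of leaf labels of a tree, in left-to-right order. -/
def leaves : PTree → List ℕ
  | .leaf i => [i]
  | .node ts => ts.attach.flatMap (fun t => leaves t.1)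
decreasing_by have := List.sizeOf_lt_of_mem t.2; simp_wf; omega

/-- The depth (number of arcs from the root) of the leaf labeled `i`. -/
def leafDepth : PTree → ℕ → ℕ
  | .leaf _, _ => 0
  | .node ts, i =>
      (ts.attach.map (fun t => if i ∈ leaves t.1 then 1 + leafDepth t.1 i else 0)).sum
decreasing_by have := List.sizeOf_lt_of_mem t.2; simp_wf; omega

/-- The cophenetic value of `i` and `j`: the depth of their lowest common ancestor. -/
def cophen : PTree → ℕ → ℕ → ℕ
  | .leaf _, _, _ => 0
  | .node ts, i, j =>
      (ts.attach.map (fun t =>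
        if i ∈ leaves t.1 ∧ j ∈ leaves t.1 then 1 + cophen t.1 i j else 0)).sum
decreasing_by have := List.sizeOf_lt_of_mem t.2; simp_wf; omega

/-- The nodal distance between the leaves labeled `i` and `j`:
the number of edges on the undirected path joining them. -/
def ndist : PTree → ℕ → ℕ → ℕ
  | .leaf _, _, _ => 0
  | .node ts, i, j =>
      (ts.attach.map (fun t =>
        if i ∈ leaves t.1 ∧ j ∈ leaves t.1 then ndist t.1 i j
        else if i ∈ leaves t.1 then 1 + leafDepth t.1 i
        else if j ∈ leaves t.1 then 1 + leafDepth t.1 j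
        else 0)).sum
decreasing_by have := List.sizeOf_lt_of_mem t.2; simp_wf; omega

/-- The list of the numbers of descendant leaves of each internal node,
with the root (if internal) first. -/
def allInternalSizes : PTree → List ℕ
  | .leaf _ => []
  | .node ts => (PTree.node ts).leaves.length :: ts.attach.flatMap (fun t => allInternalSizes t.1)
decreasing_by have := List.sizeOf_lt_of_mem t.2; simp_wf; omega

/-- The total cophenetic index: sum of cophenetic values over pairs of distinct leaves. -/
def Phi (T : PTree) : ℕ :=
  ∑ i ∈ T.leaves.toFinset, ∑ j ∈ T.leaves.toFinset, if i < j then cophen T i j else 0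

/-- The Sackin index: the sum of the depths of the leaves. -/
def Sackin (T : PTree) : ℕ := ∑ i ∈ T.leaves.toFinset, leafDepth T i

/-- The total area: the sum of the nodal distances between pairs of distinct leaves. -/
def Darea (T : PTree) : ℕ :=
  ∑ i ∈ T.leaves.toFinset, ∑ j ∈ T.leaves.toFinset, if i < j then ndist T i j else 0

/-- A tree is binary when every internal node has exactly two children. -/
def IsBinary : PTree → Prop
  | .leaf _ => True
  | .node ts => ts.length = 2 ∧ ∀ t ∈ ts.attach, IsBinary t.1
decreasing_by have := List.sizeOf_lt_of_mem t.2; simp_wf; omega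

/-- A tree is proper when every internal node has at least two children. -/
def Proper : PTree → Prop
  | .leaf _ => True
  | .node ts => 2 ≤ ts.length ∧ ∀ t ∈ ts.attach, Proper t.1
decreasing_by have := List.sizeOf_lt_of_mem t.2; simp_wf; omega

/-- `T` is a phylogenetic tree with `n` leaves: a proper rooted tree whose leaves are
bijectively labeled by `{1, …, n}`. -/
def IsPhylo (n : ℕ) (T : PTree) : Prop :=
  Proper T ∧ T.leaves.Nodup ∧ T.leaves.toFinset = Finset.Icc 1 n

/-- A rooted caterpillar: a binary tree all of whose internal nodes have a leaf child. -/
def IsCaterpillar : PTree → Prop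
  | .leaf _ => True
  | .node ts => ts.length = 2 ∧ (∃ t ∈ ts, ∃ i, t = PTree.leaf i) ∧
      ∀ t ∈ ts.attach, IsCaterpillar t.1
decreasing_by have := List.sizeOf_lt_of_mem t.2; simp_wf; omega

/-- A binary tree is maximally balanced when every internal node is balanced, i.e. the
numbers of descendant leaves of its two children differ by at most one. -/
def MaxBalanced : PTree → Prop
  | .leaf _ => True
  | .node [a, b] =>
      |(a.leaves.length : ℤ) - (b.leaves.length : ℤ)| ≤ 1 ∧ MaxBalanced a ∧ MaxBalanced b
  | .node _ => False

/-- Canonical representative of an isomorphism class of binary trees: at every internal node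
the subtree containing the smallest leaf label comes first. -/
def Canonical : PTree → Prop
  | .leaf _ => True
  | .node [a, b] => a.leaves.minimum < b.leaves.minimum ∧ Canonical a ∧ Canonical b
  | .node _ => False

/-- The rooted caterpillar with `n` leaves labeled `1, …, n` (for `n ≥ 1`). -/
def caterpillar : ℕ → PTree
  | 0 => .leaf 1
  | 1 => .leaf 1
  | n + 2 => .node [caterpillar (n + 1), .leaf (n + 2)]

/-- `Replace T t₀ t₀' T'` holds when `T'` is obtained from `T` by replacing the subtree `t₀`
of `T` rooted at some node by the tree `t₀'`. -/
inductive Replace : PTree → PTree → PTree → PTree → Prop where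
  | here (t₀ t₀' : PTree) : Replace t₀ t₀ t₀' t₀'
  | child (l r : List PTree) (a b t₀ t₀' : PTree) :
      Replace a t₀ t₀' b → Replace (.node (l ++ a :: r)) t₀ t₀' (.node (l ++ b :: r))

/-- The probability of a binary phylogenetic tree with `n` leaves under the Yule model. -/
noncomputable def yuleP (n : ℕ) (T : PTree) : ℝ :=
  (2 ^ (n - 1) / (n.factorial : ℝ)) *
    ((allInternalSizes T).map (fun k => ((k : ℝ) - 1)⁻¹)).prod

end PTree


section PhiAux

private lemma sum_sum_ite_lt' (S : Finset ℕ) :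
    (∑ i ∈ S, ∑ j ∈ S, if i < j then (1:ℕ) else 0) = S.card.choose 2 := by
  induction S using Finset.cons_induction with
  | empty => simp
  | cons a S ha ih =>
    rw [Finset.sum_cons, Finset.sum_cons]
    have h1 : ∀ i ∈ S, (∑ j ∈ Finset.cons a S ha, if i < j then (1:ℕ) else 0)
        = (if i < a then 1 else 0) + ∑ j ∈ S, if i < j then (1:ℕ) else 0 := by
      intro i _; rw [Finset.sum_cons]
    rw [Finset.sum_congr rfl h1, Finset.sum_add_distrib, ih]
    have h2 : (∑ j ∈ S, if a < j then (1:ℕ) else 0) + (∑ i ∈ S, if i < a then (1:ℕ) else 0)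
        = S.card := by
      rw [← Finset.sum_add_distrib]
      rw [Finset.sum_congr rfl (g := fun _ => (1:ℕ)) ?_, Finset.sum_const, smul_eq_mul, mul_one]
      intro x hx
      have hxa : x ≠ a := fun h => ha (h ▸ hx)
      rcases lt_or_gt_of_ne hxa with h | h
      · simp [h, not_lt_of_gt h]
      · simp [h, not_lt_of_gt h]
    rw [Finset.card_cons]
    have h3 : (S.card + 1).choose 2 = S.card.choose 1 + S.card.choose 2 :=
      Nat.choose_succ_succ S.card 1
    rw [Nat.choose_one_right] at h3
    simp only [if_neg (lt_irrefl a)]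
    omega

private lemma finsum2_listsum {α : Type*} (S T : Finset ℕ) (l : List α) (g : ℕ → ℕ → α → ℕ) :
    ∑ i ∈ S, ∑ j ∈ T, (l.map (g i j)).sum
      = (l.map (fun a => ∑ i ∈ S, ∑ j ∈ T, g i j a)).sum := by
  induction l with
  | nil => simp
  | cons a l ih => simp [Finset.sum_add_distrib, ih]

private lemma length_le_sum' (l : List ℕ) (h : ∀ x ∈ l, 1 ≤ x) : l.length ≤ l.sum := by
  induction l with
  | nil => simp
  | cons a l ih =>
    simp only [List.length_cons, List.sum_cons]
    have := h a (by simp)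
    have := ih (fun x hx => h x (by simp [hx]))
    omega

namespace PTree

lemma leaves_node' (ts : List PTree) :
    (PTree.node ts).leaves = ts.flatMap PTree.leaves := by
  rw [leaves]; simp

lemma cophen_node' (ts : List PTree) (i j : ℕ) :
    cophen (PTree.node ts) i j =
      (ts.map (fun t => if i ∈ t.leaves ∧ j ∈ t.leaves then 1 + cophen t i j else 0)).sum := by
  rw [cophen]
  congr 1
  exact List.attach_map_val (l := ts) (f := fun t => if i ∈ t.leaves ∧ j ∈ t.leaves then 1 + cophen t i j else 0)

lemma nodup_child' {ts : List PTree} (hnd : (PTree.node ts).leaves.Nodup)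
    {t : PTree} (ht : t ∈ ts) : t.leaves.Nodup := by
  rw [leaves_node'] at hnd
  obtain ⟨s1, s2, rfl⟩ := List.append_of_mem ht
  rw [List.flatMap_append, List.flatMap_cons] at hnd
  exact hnd.of_append_right.of_append_left

lemma Phi_node' (ts : List PTree) (hnd : ∀ t ∈ ts, t.leaves.Nodup) :
    Phi (PTree.node ts) =
      (ts.map (fun t => t.leaves.length.choose 2 + Phi t)).sum := by
  rw [Phi]
  have step1 : ∀ i ∈ (PTree.node ts).leaves.toFinset, ∀ j ∈ (PTree.node ts).leaves.toFinset,
      (if i < j then cophen (PTree.node ts) i j else 0)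
      = (ts.map (fun t => if i < j then
          (if i ∈ t.leaves ∧ j ∈ t.leaves then 1 + cophen t i j else 0) else 0)).sum := by
    intro i _ j _
    rw [cophen_node']
    split_ifs with h
    · rfl
    · simp
  rw [Finset.sum_congr rfl fun i hi => Finset.sum_congr rfl fun j hj => step1 i hi j hj]
  rw [finsum2_listsum]
  refine congrArg List.sum (List.map_congr_left fun t ht => ?_)
  set S := (PTree.node ts).leaves.toFinset with hS
  have hsub : t.leaves.toFinset ⊆ S := by
    intro x hx
    rw [List.mem_toFinset] at hx
    rw [hS, List.mem_toFinset, leaves_node', List.mem_flatMap]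
    exact ⟨t, ht, hx⟩
  have e1 : (∑ i ∈ S, ∑ j ∈ S, if i < j then
        (if i ∈ t.leaves ∧ j ∈ t.leaves then 1 + cophen t i j else 0) else 0)
      = ∑ i ∈ t.leaves.toFinset, ∑ j ∈ t.leaves.toFinset, if i < j then
        (if i ∈ t.leaves ∧ j ∈ t.leaves then 1 + cophen t i j else 0) else 0 := by
    rw [← Finset.sum_subset hsub (fun i _ hi => ?_)]
    · refine Finset.sum_congr rfl fun i hi => ?_
      rw [← Finset.sum_subset hsub (fun j _ hj => ?_)]
      rw [List.mem_toFinset] at hj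
      simp [hj]
    · rw [List.mem_toFinset] at hi
      refine Finset.sum_eq_zero fun j _ => by simp [hi]
  rw [e1]
  have e2 : ∀ i ∈ t.leaves.toFinset, ∀ j ∈ t.leaves.toFinset,
      (if i < j then (if i ∈ t.leaves ∧ j ∈ t.leaves then 1 + cophen t i j else 0) else 0)
      = (if i < j then (1:ℕ) else 0) + (if i < j then cophen t i j else 0) := by
    intro i hi j hj
    rw [List.mem_toFinset] at hi hj
    by_cases h : i < j <;> simp [h, hi, hj]
  rw [Finset.sum_congr rfl fun i hi => Finset.sum_congr rfl fun j hj => e2 i hi j hj]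
  have e3 : (∑ i ∈ t.leaves.toFinset, ∑ j ∈ t.leaves.toFinset,
      ((if i < j then (1:ℕ) else 0) + (if i < j then cophen t i j else 0)))
      = (∑ i ∈ t.leaves.toFinset, ∑ j ∈ t.leaves.toFinset, if i < j then (1:ℕ) else 0)
      + (∑ i ∈ t.leaves.toFinset, ∑ j ∈ t.leaves.toFinset, if i < j then cophen t i j else 0) := by
    rw [← Finset.sum_add_distrib]
    exact Finset.sum_congr rfl fun i _ => Finset.sum_add_distrib
  rw [e3, sum_sum_ite_lt', List.toFinset_card_of_nodup (hnd t ht), Phi]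

end PTree

end PhiAux

theorem phi_group_children (ts : List PTree) (hk : 3 ≤ ts.length) (hne : ts ≠ [])
    (hnd : (PTree.node ts).leaves.Nodup)
    (hleaf : ∀ t ∈ ts, t.leaves ≠ []) :
    PTree.Phi (PTree.node [PTree.node ts.dropLast, ts.getLast hne]) =
      PTree.Phi (PTree.node ts) +
        Nat.choose ((ts.dropLast.map (fun t => t.leaves.length)).sum) 2 ∧
    PTree.Phi (PTree.node ts) <
      PTree.Phi (PTree.node [PTree.node ts.dropLast, ts.getLast hne]) := by
  set l := ts.dropLast with hl
  set b := ts.getLast hne with hb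
  have hts : l ++ [b] = ts := List.dropLast_append_getLast hne
  have hndc : ∀ t ∈ ts, t.leaves.Nodup := fun t ht => PTree.nodup_child' hnd ht
  have hmeml : ∀ t ∈ l, t ∈ ts := fun t ht => (List.dropLast_sublist ts).subset ht
  have hla : (PTree.node l).leaves = l.flatMap PTree.leaves := PTree.leaves_node' l
  have hndts : (ts.flatMap PTree.leaves).Nodup := by
    rw [← PTree.leaves_node']; exact hnd
  have hsplit : ts.flatMap PTree.leaves = l.flatMap PTree.leaves ++ b.leaves := by
    conv_lhs => rw [← hts]
    simp
  have hnda : (PTree.node l).leaves.Nodup := by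
    rw [hla]; rw [hsplit] at hndts; exact hndts.of_append_left
  have h1 : PTree.Phi (PTree.node ts)
      = (ts.map (fun t => t.leaves.length.choose 2 + PTree.Phi t)).sum :=
    PTree.Phi_node' ts hndc
  have h2 : PTree.Phi (PTree.node l)
      = (l.map (fun t => t.leaves.length.choose 2 + PTree.Phi t)).sum :=
    PTree.Phi_node' l (fun t ht => hndc t (hmeml t ht))
  have hbmem : b ∈ ts := List.getLast_mem hne
  have h3 : PTree.Phi (PTree.node [PTree.node l, b])
      = ((PTree.node l).leaves.length.choose 2 + PTree.Phi (PTree.node l))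
        + ((b.leaves.length.choose 2 + PTree.Phi b) + 0) := by
    exact PTree.Phi_node' [PTree.node l, b] (by
      intro t ht
      simp only [List.mem_cons, List.not_mem_nil, or_false] at ht
      rcases ht with rfl | rfl
      · exact hnda
      · exact hndc b hbmem)
  have hN : (PTree.node l).leaves.length = (l.map (fun t => t.leaves.length)).sum := by
    rw [hla, List.length_flatMap]
  have hsum : (ts.map (fun t => t.leaves.length.choose 2 + PTree.Phi t)).sum
      = (l.map (fun t => t.leaves.length.choose 2 + PTree.Phi t)).sum
        + (b.leaves.length.choose 2 + PTree.Phi b) := by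
    conv_lhs => rw [← hts]
    simp
  have key : PTree.Phi (PTree.node [PTree.node l, b]) =
      PTree.Phi (PTree.node ts) + Nat.choose ((l.map (fun t => t.leaves.length)).sum) 2 := by
    rw [h3, h2, h1, hsum, hN]
    omega
  have h2le : 2 ≤ (l.map (fun t => t.leaves.length)).sum := by
    have hlen : 2 ≤ l.length := by
      rw [hl, List.length_dropLast]; omega
    have h1le : ∀ x ∈ l.map (fun t => t.leaves.length), 1 ≤ x := by
      intro x hx
      rw [List.mem_map] at hx
      obtain ⟨t, ht, rfl⟩ := hx
      have := hleaf t (hmeml t ht)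
      have := List.length_pos_iff.mpr this
      omega
    have := length_le_sum' _ h1le
    rw [List.length_map] at this
    omega
  have hpos : 0 < Nat.choose ((l.map (fun t => t.leaves.length)).sum) 2 :=
    Nat.choose_pos h2le
  exact ⟨key, by rw [key]; omega⟩
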